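/- Let α ∈ (0,1] and β > 0 with β ≤ 2/(1+α). Then (0,0) is the unique maximizer of the free energy functional G_{α,β} on [−1,1]²: G_{α,β}(m) < G_{α,β}(0,0) for every m ∈ [−1,1]² with m ≠ (0,0). -/

import Mathlib

open Filter

noncomputable section

/-- `E_α(m)`. -/
def Ebil (a : ℝ) (m : ℝ × ℝ) : ℝ := (m.1 ^ 2 + m.2 ^ 2) / 4 + (a / 2) * m.1 * m.2

/-- One-dimensional entropy term. -/
def entI (x : ℝ) : ℝ :=
  ((1 + x) / 2) * Real.log ((1 + x) / 2) + ((1 - x) / 2) * Real.log ((1 - x) / 2)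

/-- Free energy functional `G_{α,β}`. -/
def Gfun (a β : ℝ) (m : ℝ × ℝ) : ℝ := β * Ebil a m - (entI m.1 + entI m.2)

/-- Inverse hyperbolic tangent. -/
def arctanh (x : ℝ) : ℝ := (1 / 2) * Real.log ((1 + x) / (1 - x))

/-- The Hessian matrix of `G_{α,β}` at `m`. -/
def hessG (a β : ℝ) (m : ℝ × ℝ) : Matrix (Fin 2) (Fin 2) ℝ :=
  !![β / 2 - 1 / (1 - m.1 ^ 2), β * a / 2; β * a / 2, β / 2 - 1 / (1 - m.2 ^ 2)]

/-- The square `[−1,1]²`. -/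
def box : Set (ℝ × ℝ) := Set.Icc (-1 : ℝ) 1 ×ˢ Set.Icc (-1 : ℝ) 1

lemma entI_zero : entI 0 = -Real.log 2 := by
  unfold entI
  norm_num
  rw [show (1:ℝ)/2 = 2⁻¹ by norm_num, Real.log_inv]
  ring

lemma entI_neg (x : ℝ) : entI (-x) = entI x := by
  unfold entI
  rw [show (1 + -x)/2 = (1-x)/2 by ring, show (1 - -x)/2 = (1+x)/2 by ring]
  ring

lemma entI_one : entI 1 = 0 := by
  unfold entI
  norm_num

lemma hasDerivAt_entI (x : ℝ) (h1 : -1 < x) (h2 : x < 1) :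
    HasDerivAt entI ((1/2) * (Real.log ((1+x)/2) - Real.log ((1-x)/2))) x := by
  have hp : (0:ℝ) < (1+x)/2 := by linarith
  have hm : (0:ℝ) < (1-x)/2 := by linarith
  have d1 : HasDerivAt (fun y : ℝ => (1+y)/2) (1/2) x := by
    simpa using ((hasDerivAt_id x).const_add 1).div_const 2
  have d2 : HasDerivAt (fun y : ℝ => (1-y)/2) (-1/2) x := by
    simpa using ((hasDerivAt_id x).const_sub 1).div_const 2
  have l1 := d1.log hp.ne'
  have l2 := d2.log hm.ne'
  have h := (d1.mul l1).add (d2.mul l2)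
  have e1 : (1+x)/2 * (1/2/((1+x)/2)) = 1/2 := by
    rw [mul_comm, div_mul_cancel₀ _ hp.ne']
  have e2 : (1-x)/2 * (-1/2/((1-x)/2)) = -(1/2) := by
    rw [mul_comm, div_mul_cancel₀ _ hm.ne']; norm_num
  convert h using 1
  · rfl
  · rfl
  · rfl
  rw [e1, e2]
  ring

lemma hasDerivAt_gAux (x : ℝ) (h1 : -1 < x) (h2 : x < 1) :
    HasDerivAt (fun y : ℝ => Real.log ((1+y)/2) - Real.log ((1-y)/2) - 2*y)
      (1/(1+x) + 1/(1-x) - 2) x := by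
  have hp : (0:ℝ) < (1+x)/2 := by linarith
  have hm : (0:ℝ) < (1-x)/2 := by linarith
  have d1 : HasDerivAt (fun y : ℝ => (1+y)/2) (1/2) x := by
    simpa using ((hasDerivAt_id x).const_add 1).div_const 2
  have d2 : HasDerivAt (fun y : ℝ => (1-y)/2) (-1/2) x := by
    simpa using ((hasDerivAt_id x).const_sub 1).div_const 2
  have l1 := d1.log hp.ne'
  have l2 := d2.log hm.ne'
  have dl : HasDerivAt (fun y : ℝ => 2*y) 2 x := by
    simpa using (hasDerivAt_id x).const_mul 2
  have h := (l1.sub l2).sub dl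
  convert h using 1
  · rfl
  · rfl
  · rfl
  have hpn : (1+x) ≠ 0 := by linarith
  have hmn : (1-x) ≠ 0 := by linarith
  field_simp
  ring

lemma gAux_pos (x : ℝ) (h0 : 0 < x) (h1 : x < 1) :
    2*x < Real.log ((1+x)/2) - Real.log ((1-x)/2) := by
  set G : ℝ → ℝ := fun y => Real.log ((1+y)/2) - Real.log ((1-y)/2) - 2*y with hG
  have hd : ∀ y ∈ Set.Ico (0:ℝ) 1, HasDerivAt G (1/(1+y) + 1/(1-y) - 2) y := by
    intro y hy
    exact hasDerivAt_gAux y (by linarith [hy.1]) hy.2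
  have mono : StrictMonoOn G (Set.Ico 0 1) := by
    apply strictMonoOn_of_deriv_pos (convex_Ico 0 1)
    · intro y hy
      exact (hd y hy).continuousAt.continuousWithinAt
    · intro y hy
      rw [interior_Ico] at hy
      rw [(hd y ⟨hy.1.le, hy.2⟩).deriv]
      have hpn : (0:ℝ) < 1 + y := by linarith [hy.1]
      have hmn : (0:ℝ) < 1 - y := by linarith [hy.2]
      have key : 1/(1+y) + 1/(1-y) - 2 = 2*y^2/((1+y)*(1-y)) := by
        field_simp
        ring
      rw [key]
      exact div_pos (by nlinarith [hy.1]) (mul_pos hpn hmn)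
  have h := mono (Set.mem_Ico.2 ⟨le_refl 0, one_pos⟩) (Set.mem_Ico.2 ⟨h0.le, h1⟩) h0
  have hG0 : G 0 = 0 := by simp [hG]
  rw [hG0] at h
  simp only [hG] at h
  linarith

lemma F_pos (x : ℝ) (h0 : 0 < x) (h1 : x < 1) :
    x^2/2 < entI x + Real.log 2 := by
  set F : ℝ → ℝ := fun y => entI y + Real.log 2 - y^2/2 with hF
  have hd : ∀ y, -1 < y → y < 1 → HasDerivAt F
      ((1/2) * (Real.log ((1+y)/2) - Real.log ((1-y)/2)) - y) y := by
    intro y hy1 hy2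
    have hsq : HasDerivAt (fun z : ℝ => z^2/2) y y := by
      simpa using (hasDerivAt_pow 2 y).div_const 2
    exact ((hasDerivAt_entI y hy1 hy2).add_const _).sub hsq
  have mono : StrictMonoOn F (Set.Ico 0 1) := by
    apply strictMonoOn_of_deriv_pos (convex_Ico 0 1)
    · intro y hy
      exact (hd y (by linarith [hy.1]) hy.2).continuousAt.continuousWithinAt
    · intro y hy
      rw [interior_Ico] at hy
      rw [(hd y (by linarith [hy.1]) hy.2).deriv]
      have := gAux_pos y hy.1 hy.2
      linarith
  have h := mono (Set.mem_Ico.2 ⟨le_refl 0, one_pos⟩) (Set.mem_Ico.2 ⟨h0.le, h1⟩) h0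
  have hF0 : F 0 = 0 := by simp [hF, entI_zero]
  rw [hF0] at h
  simp only [hF] at h
  linarith

lemma log_two_gt_half : (1:ℝ)/2 < Real.log 2 := by
  have := Real.log_two_gt_d9
  linarith

lemma key_strict (x : ℝ) (hx : x ∈ Set.Icc (-1:ℝ) 1) (hne : x ≠ 0) :
    x^2/2 < entI x + Real.log 2 := by
  rcases hx with ⟨hl, hr⟩
  rcases lt_trichotomy x 0 with h | h | h
  · rcases eq_or_lt_of_le hl with h1 | h1
    · rw [← h1]
      rw [show entI (-1) = entI 1 by rw [← entI_neg 1]]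
      rw [entI_one]
      have := log_two_gt_half
      norm_num
      linarith
    · have := F_pos (-x) (by linarith) (by linarith)
      rw [entI_neg] at this
      nlinarith
  · exact absurd h hne
  · rcases eq_or_lt_of_le hr with h1 | h1
    · rw [h1, entI_one]
      have := log_two_gt_half
      norm_num
      linarith
    · exact F_pos x h h1

lemma key_le (x : ℝ) (hx : x ∈ Set.Icc (-1:ℝ) 1) :
    x^2/2 ≤ entI x + Real.log 2 := by
  by_cases h : x = 0
  · simp [h, entI_zero]
  · exact (key_strict x hx h).le

/-- for `α ∈ (0,1]` and `0 < β ≤ 2/(1+α)`, the origin is the unique maximizer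
of `G_{α,β}` on `[−1,1]²`. -/
theorem G_unique_maximizer_subcritical
    (α β : ℝ) (hα : α ∈ Set.Ioc (0 : ℝ) 1) (hβpos : 0 < β) (hβ : β ≤ 2 / (1 + α)) :
    ∀ m ∈ box, m ≠ ((0 : ℝ), (0 : ℝ)) → Gfun α β m < Gfun α β (0, 0) := by
  obtain ⟨hα0, hα1⟩ := hα
  rintro ⟨x, y⟩ ⟨hx, hy⟩ hne
  have hG0 : Gfun α β (0, 0) = 2 * Real.log 2 := by
    simp [Gfun, Ebil, entI_zero]
    ring
  rw [hG0]
  have h1α : (0:ℝ) < 1 + α := by linarith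
  have hβα : β * (1 + α) ≤ 2 := by
    rw [le_div_iff₀ h1α] at hβ
    exact hβ
  have hE : β * Ebil α (x, y) ≤ (x^2 + y^2)/2 := by
    have h1 : 0 ≤ β * α * (x - y)^2 := by positivity
    have h2 : 0 ≤ (2 - β * (1 + α)) * (x^2 + y^2) := by
      apply mul_nonneg (by linarith)
      positivity
    simp only [Ebil]
    nlinarith [h1, h2]
  have hkx : x^2/2 ≤ entI x + Real.log 2 := key_le x hx
  have hky : y^2/2 ≤ entI y + Real.log 2 := key_le y hy
  have hxy : x ≠ 0 ∨ y ≠ 0 := by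
    by_contra h
    push_neg at h
    exact hne (by rw [h.1, h.2])
  have hsum : (x^2 + y^2)/2 < (entI x + Real.log 2) + (entI y + Real.log 2) := by
    rcases hxy with h | h
    · have := key_strict x hx h
      linarith
    · have := key_strict y hy h
      linarith
  simp only [Gfun]
  linarith

end
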